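/- Let N ≤ M be positive integers and G = diag(1_N, −1_M) the (N+M)×(N+M) signature matrix. (a) Every complex linear subspace W of ℂ^{N+M} on which the Hermitian form v ↦ v*·G·v vanishes identically satisfies dim W ≤ N. (b) Consequently, for every (N+M)×(N+M) complex matrix T with T*·G·T = G, the sum of the generalized eigenspaces of T corresponding to eigenvalues of modulus strictly greater than 1 has dimension at most N; equivalently, T has at least M − N eigenvalues (counted with algebraic multiplicity) on the unit circle. -/

import Mathlib

open Matrix

/-- The `(N+M)×(N+M)` signature matrix `G = diag(1_N, −1_M)`. -/
def Gmat (N M : ℕ) : Matrix (Fin N ⊕ Fin M) (Fin N ⊕ Fin M) ℂ :=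
  Matrix.fromBlocks 1 0 0 (-1)

/-- Key lemma: for a `G`-unitary `T` and `conj l * m ≠ 1`, generalized eigenvectors for
`l` and `m` are `G`-orthogonal. -/
lemma gen_eig_orth {n : Type*} [Fintype n] [DecidableEq n]
    (G T : Matrix n n ℂ) (hT : Tᴴ * G * T = G) (l m : ℂ)
    (hlm : (starRingEnd ℂ) l * m ≠ 1) :
    ∀ K k j : ℕ, k + j ≤ K → ∀ v w : n → ℂ,
      (T - l • 1) ^ k *ᵥ v = 0 → (T - m • 1) ^ j *ᵥ w = 0 →
      star v ⬝ᵥ G *ᵥ w = 0 := by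
  have hinv : ∀ a b : n → ℂ, star (T *ᵥ a) ⬝ᵥ G *ᵥ (T *ᵥ b) = star a ⬝ᵥ G *ᵥ b := by
    intro a b
    rw [star_mulVec, mulVec_mulVec, dotProduct_mulVec, vecMul_vecMul, ← dotProduct_mulVec,
      ← Matrix.mul_assoc, hT]
  intro K
  induction K with
  | zero =>
    intro k j hkj v w hv hw
    have hk : k = 0 := by omega
    subst hk
    rw [pow_zero, one_mulVec] at hv
    simp [hv]
  | succ K ih =>
    intro k j hkj v w hv hw
    match k, j with
    | 0, j =>
      rw [pow_zero, one_mulVec] at hv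
      simp [hv]
    | k, 0 =>
      rw [pow_zero, one_mulVec] at hw
      simp [hw]
    | k + 1, j + 1 =>
      set v' := (T - l • 1) *ᵥ v with hv'def
      set w' := (T - m • 1) *ᵥ w with hw'def
      have hv' : (T - l • 1) ^ k *ᵥ v' = 0 := by
        rw [hv'def, mulVec_mulVec, ← pow_succ]; exact hv
      have hw' : (T - m • 1) ^ j *ᵥ w' = 0 := by
        rw [hw'def, mulVec_mulVec, ← pow_succ]; exact hw
      have hTv : T *ᵥ v = l • v + v' := by
        rw [hv'def, sub_mulVec, smul_mulVec, one_mulVec]; abel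
      have hTw : T *ᵥ w = m • w + w' := by
        rw [hw'def, sub_mulVec, smul_mulVec, one_mulVec]; abel
      have e1 : star v ⬝ᵥ G *ᵥ w' = 0 :=
        ih (k + 1) j (by omega) v w' hv hw'
      have e2 : star v' ⬝ᵥ G *ᵥ w = 0 :=
        ih k (j + 1) (by omega) v' w hv' hw
      have e3 : star v' ⬝ᵥ G *ᵥ w' = 0 :=
        ih k j (by omega) v' w' hv' hw'
      have key : star v ⬝ᵥ G *ᵥ w =
          (starRingEnd ℂ) l * m * (star v ⬝ᵥ G *ᵥ w) := by
        calc star v ⬝ᵥ G *ᵥ w = star (T *ᵥ v) ⬝ᵥ G *ᵥ (T *ᵥ w) := (hinv v w).symm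
          _ = star (l • v + v') ⬝ᵥ G *ᵥ (m • w + w') := by rw [hTv, hTw]
          _ = (starRingEnd ℂ) l * m * (star v ⬝ᵥ G *ᵥ w) := by
              rw [star_add, star_smul, mulVec_add, mulVec_smul, add_dotProduct,
                smul_dotProduct, dotProduct_add, dotProduct_smul, dotProduct_add,
                dotProduct_smul, e1, e2, e3]
              simp [smul_eq_mul]
              ring
      have : (1 - (starRingEnd ℂ) l * m) * (star v ⬝ᵥ G *ᵥ w) = 0 := by
        rw [sub_mul, one_mul, ← key, sub_self]
      rcases mul_eq_zero.mp this with h | h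
      · exact absurd (by linear_combination -h) hlm
      · exact h

/-- Part (a): isotropic subspaces have dimension at most `N`. -/
lemma isotropic_aux (N M : ℕ) (W : Submodule ℂ (Fin N ⊕ Fin M → ℂ))
    (h : ∀ v ∈ W, star v ⬝ᵥ (Gmat N M).mulVec v = 0) :
    Module.finrank ℂ ↥W ≤ N := by
  have hGv : ∀ v : Fin N ⊕ Fin M → ℂ,
      (Gmat N M).mulVec v = Sum.elim (v ∘ Sum.inl) (-(v ∘ Sum.inr)) := by
    intro v
    rw [Gmat, fromBlocks_mulVec]
    simp [Matrix.neg_mulVec, Matrix.one_mulVec]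
  have hB : ∀ v : Fin N ⊕ Fin M → ℂ,
      star v ⬝ᵥ (Gmat N M).mulVec v =
        (∑ i, star (v (Sum.inl i)) * v (Sum.inl i))
          - ∑ j, star (v (Sum.inr j)) * v (Sum.inr j) := by
    intro v
    rw [hGv, dotProduct, Fintype.sum_sum_type]
    simp [sub_eq_add_neg, ← Finset.sum_neg_distrib]
  -- the projection to the first block is injective on W
  set f : ↥W →ₗ[ℂ] (Fin N → ℂ) := (LinearMap.funLeft ℂ ℂ Sum.inl).comp W.subtype with hf
  have hinj : Function.Injective f := by
    rw [← LinearMap.ker_eq_bot, LinearMap.ker_eq_bot']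
    intro ⟨v, hv⟩ hfv
    have hvl : ∀ i, v (Sum.inl i) = 0 := fun i => congrFun hfv i
    have h0 := h v hv
    rw [hB v] at h0
    have hsum : (∑ j, star (v (Sum.inr j)) * v (Sum.inr j)) = 0 := by
      simp [hvl] at h0
      simpa using h0
    have hreal : (∑ j, Complex.normSq (v (Sum.inr j)) : ℝ) = 0 := by
      have : ((∑ j, Complex.normSq (v (Sum.inr j)) : ℝ) : ℂ) = 0 := by
        push_cast
        rw [← hsum]
        congr 1; funext j
        rw [← Complex.mul_conj (v (Sum.inr j)), mul_comm]
        rfl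
      exact_mod_cast this
    have hvr : ∀ j, v (Sum.inr j) = 0 := by
      intro j
      have := (Finset.sum_eq_zero_iff_of_nonneg (fun i _ => Complex.normSq_nonneg _)).mp hreal j
        (Finset.mem_univ j)
      exact Complex.normSq_eq_zero.mp this
    ext k
    cases k with
    | inl i => exact hvl i
    | inr j => exact hvr j
  calc Module.finrank ℂ ↥W ≤ Module.finrank ℂ (Fin N → ℂ) :=
        LinearMap.finrank_le_finrank_of_injective hinj
    _ = N := by simp [Module.finrank_pi]


/-- (a) Every subspace of `ℂ^{N+M}` on which the Hermitian form `v ↦ v*·G·v` vanishes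
identically has dimension at most `N`. (b) Consequently, for any `T` with `T*·G·T = G`,
the sum of the generalized eigenspaces of `T` for eigenvalues of modulus `> 1` has
dimension at most `N`. -/
theorem isotropic_dim_le_and_hyperbolic_dim_le (N M : ℕ) (hN : 0 < N) (hNM : N ≤ M) :
    (∀ W : Submodule ℂ (Fin N ⊕ Fin M → ℂ),
      (∀ v ∈ W, star v ⬝ᵥ (Gmat N M).mulVec v = 0) → Module.finrank ℂ ↥W ≤ N) ∧
    (∀ T : Matrix (Fin N ⊕ Fin M) (Fin N ⊕ Fin M) ℂ, Tᴴ * Gmat N M * T = Gmat N M →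
      Module.finrank ℂ
        ↥(⨆ lam ∈ {l : ℂ | 1 < ‖l‖},
          LinearMap.ker (Matrix.toLin'
            ((T - lam • (1 : Matrix (Fin N ⊕ Fin M) (Fin N ⊕ Fin M) ℂ)) ^ (N + M)))) ≤ N) := by
  refine ⟨isotropic_aux N M, ?_⟩
  intro T hT
  set G : Matrix (Fin N ⊕ Fin M) (Fin N ⊕ Fin M) ℂ := Gmat N M with hG
  set S : Submodule ℂ (Fin N ⊕ Fin M → ℂ) :=
    ⨆ lam ∈ {l : ℂ | 1 < ‖l‖},
      LinearMap.ker (Matrix.toLin' ((T - lam • 1) ^ (N + M))) with hS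
  -- step 1 : fixed generalized eigenvector v, all of S is G-orthogonal to v
  have step1 : ∀ l : ℂ, 1 < ‖l‖ → ∀ v : Fin N ⊕ Fin M → ℂ,
      (T - l • 1) ^ (N + M) *ᵥ v = 0 → ∀ w ∈ S, star v ⬝ᵥ G *ᵥ w = 0 := by
    intro l hl v hv
    let L : (Fin N ⊕ Fin M → ℂ) →ₗ[ℂ] ℂ :=
      { toFun := fun w => star v ⬝ᵥ G *ᵥ w
        map_add' := fun a b => by simp only [mulVec_add, dotProduct_add]
        map_smul' := fun c a => by
          simp only [mulVec_smul, dotProduct_smul, RingHom.id_apply, smul_eq_mul] }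
    have hle : S ≤ LinearMap.ker L := by
      rw [hS]
      refine iSup₂_le fun m hm => fun w hw => ?_
      rw [LinearMap.mem_ker, Matrix.toLin'_apply] at hw
      have hlm : (starRingEnd ℂ) l * m ≠ 1 := by
        intro h
        have : ‖(starRingEnd ℂ) l * m‖ = 1 := by rw [h]; simp
        rw [norm_mul, Complex.norm_conj] at this
        have hm' : 1 < ‖m‖ := hm
        nlinarith [hl, hm']
      exact gen_eig_orth G T hT l m hlm (2 * (N + M)) (N + M) (N + M) (by omega) v w hv hw
    exact fun w hw => hle hw
  -- step 2 : S is totally G-isotropic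
  have step2 : ∀ v ∈ S, ∀ w ∈ S, star v ⬝ᵥ G *ᵥ w = 0 := by
    intro v hv
    let V : Submodule ℂ (Fin N ⊕ Fin M → ℂ) :=
      { carrier := {u | ∀ w ∈ S, star u ⬝ᵥ G *ᵥ w = 0}
        add_mem' := fun {a b} ha hb w hw => by
          rw [star_add, add_dotProduct, ha w hw, hb w hw, add_zero]
        zero_mem' := fun w hw => by simp
        smul_mem' := fun c a ha w hw => by
          rw [star_smul, smul_dotProduct, ha w hw, smul_zero] }
    have hle : S ≤ V := by
      rw [hS]
      refine iSup₂_le fun l hl => fun u hu => ?_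
      rw [LinearMap.mem_ker, Matrix.toLin'_apply] at hu
      exact step1 l hl u hu
    exact hle hv
  exact isotropic_aux N M S (fun v hv => step2 v hv v hv)
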